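/- For all n ≥ 1 and k ≥ 0, the number of permutations π ∈ S_n with pk(π) = k and pk(π⁻¹) = 0 equals the binomial coefficient C(n, 2k+1). -/

import Mathlib

open Finset

section Defs
variable {α : Type*} [LinearOrder α]

/-- Number of descents of a list. -/
def descentsCount : List α → ℕ
  | a :: b :: l => (if b < a then 1 else 0) + descentsCount (b :: l)
  | _ => 0

/-- Number of (interior) peaks of a list. -/
def peaksCount : List α → ℕ
  | a :: b :: c :: l => (if a < b ∧ c < b then 1 else 0) + peaksCount (b :: c :: l)
  | _ => 0

/-- 1 if the list starts with a descent, else 0. -/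
def initDesc : List α → ℕ
  | a :: b :: _ => if b < a then 1 else 0
  | _ => 0

/-- Number of left peaks of a list. -/
def leftPeaksCount (l : List α) : ℕ := initDesc l + peaksCount l

/-- Number of interior direction changes. -/
def turnsCount : List α → ℕ
  | a :: b :: c :: l => (if (a < b ∧ c < b) ∨ (b < a ∧ b < c) then 1 else 0) + turnsCount (b :: c :: l)
  | _ => 0

/-- Number of biruns (maximal monotone consecutive subsequences). -/
def birunsCount (l : List α) : ℕ := if l = [] then 0 else turnsCount l + 1

/-- Number of up-down runs. -/
def udrCount (l : List α) : ℕ := initDesc l + birunsCount l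

/-- `IsAltFrom true l` : the list `l` alternates starting with a descent. -/
def IsAltFrom : Bool → List α → Prop
  | _, [] => True
  | _, [_] => True
  | true, a :: b :: l => b < a ∧ IsAltFrom false (b :: l)
  | false, a :: b :: l => a < b ∧ IsAltFrom true (b :: l)

end Defs

def desP {n : ℕ} (π : Equiv.Perm (Fin n)) : ℕ := descentsCount (List.ofFn ⇑π)
def pkP {n : ℕ} (π : Equiv.Perm (Fin n)) : ℕ := peaksCount (List.ofFn ⇑π)
def lpkP {n : ℕ} (π : Equiv.Perm (Fin n)) : ℕ := leftPeaksCount (List.ofFn ⇑π)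
def brP {n : ℕ} (π : Equiv.Perm (Fin n)) : ℕ := birunsCount (List.ofFn ⇑π)
def udrP {n : ℕ} (π : Equiv.Perm (Fin n)) : ℕ := udrCount (List.ofFn ⇑π)
def AltP {n : ℕ} (π : Equiv.Perm (Fin n)) : Prop := IsAltFrom true (List.ofFn ⇑π)

def fixedCount {n : ℕ} (π : Equiv.Perm (Fin n)) : ℕ :=
  (Finset.univ.filter fun x => π x = x).card
def cycleCount {n : ℕ} (π : Equiv.Perm (Fin n)) : ℕ := π.cycleType.card + fixedCount π
def oddCycleCount {n : ℕ} (π : Equiv.Perm (Fin n)) : ℕ :=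
  (π.cycleType.filter fun l => l % 2 = 1).card + fixedCount π

noncomputable def stirC (n k : ℕ) : ℕ := Nat.card {π : Equiv.Perm (Fin n) // cycleCount π = k}
noncomputable def dOdd (n k : ℕ) : ℕ :=
  Nat.card {π : Equiv.Perm (Fin n) // cycleCount π = k ∧ ∀ l ∈ π.cycleType, l % 2 = 1}
noncomputable def eOdd (n k : ℕ) : ℕ := Nat.card {π : Equiv.Perm (Fin n) // oddCycleCount π = k}
noncomputable def fOdd (n k m : ℕ) : ℕ :=
  Nat.card {π : Equiv.Perm (Fin n) // oddCycleCount π = k ∧ cycleCount π = m}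

noncomputable def eulerE (k : ℕ) : ℕ := Nat.card {π : Equiv.Perm (Fin k) // AltP π}


section Proof1Aux


open Finset

section AuxPeaks
variable {α : Type*} [LinearOrder α]

lemma peaksCount_eq_countP (d : α) (l : List α) :
    peaksCount l = (List.range (l.length - 2)).countP
      (fun i => decide (l.getD i d < l.getD (i+1) d ∧ l.getD (i+2) d < l.getD (i+1) d)) := by
  match l with
  | [] => simp [peaksCount]
  | [a] => simp [peaksCount]
  | [a, b] => simp [peaksCount]
  | a :: b :: c :: t =>
    rw [peaksCount]
    rw [peaksCount_eq_countP d (b :: c :: t)]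
    have hlen : (a :: b :: c :: t).length - 2 = ((b :: c :: t).length - 2) + 1 := by
      simp
    rw [hlen, List.range_succ_eq_map, List.countP_cons, List.countP_map]
    simp only [List.getD_cons_succ, List.getD_cons_zero, Function.comp]
    rw [Nat.add_comm]
    congr 1
    simp [decide_eq_true_eq]

lemma countP_range_eq (p : ℕ → Prop) [DecidablePred p] (N : ℕ) :
    (List.range N).countP (fun i => decide (p i)) = ((Finset.range N).filter p).card := by
  induction N with
  | zero => simp
  | succ m ih =>
    rw [List.range_succ, List.countP_append, Finset.range_add_one, Finset.filter_insert]
    by_cases h : p m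
    · rw [if_pos h, Finset.card_insert_of_notMem (by simp)]
      simp [h, ih]
    · rw [if_neg h]
      simp [h, ih]

lemma filter_range_shift (m : ℕ) (r : ℕ → Prop) [DecidablePred r] :
    ((Finset.range (m+1)).filter (fun v => 1 ≤ v ∧ r v)).card
      = ((Finset.range m).filter (fun i => r (i+1))).card := by
  refine Finset.card_bij' (fun v _ => v - 1) (fun i _ => i + 1) ?_ ?_ ?_ ?_
  · intro a ha
    simp only [Finset.mem_filter, Finset.mem_range] at ha ⊢
    obtain ⟨h1, h2, h3⟩ := ha
    refine ⟨by omega, ?_⟩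
    rwa [Nat.sub_add_cancel h2]
  · intro a ha
    simp only [Finset.mem_filter, Finset.mem_range] at ha ⊢
    exact ⟨by omega, by omega, ha.2⟩
  · intro a ha
    simp only [Finset.mem_filter, Finset.mem_range] at ha
    show a - 1 + 1 = a
    omega
  · intro a ha
    show a + 1 - 1 = a
    omega

def idx {n : ℕ} (hn : 0 < n) (i : ℕ) : Fin n := ⟨i % n, Nat.mod_lt _ hn⟩

lemma idx_val {n : ℕ} (hn : 0 < n) {i : ℕ} (h : i < n) : (idx hn i : Fin n).val = i :=
  Nat.mod_eq_of_lt h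

lemma peaksCount_ofFn {n : ℕ} (hn : 0 < n) (f : Fin n → α) :
    peaksCount (List.ofFn f) = ((Finset.range (n-2)).filter
      (fun i => f (idx hn i) < f (idx hn (i+1)) ∧ f (idx hn (i+2)) < f (idx hn (i+1)))).card := by
  rw [peaksCount_eq_countP (f ⟨0, hn⟩), ← countP_range_eq]
  rw [List.length_ofFn]
  apply List.countP_congr
  intro i hi
  rw [List.mem_range] at hi
  have h2 : i + 2 < n := by omega
  have g : ∀ j (hj : j < n), (List.ofFn f).getD j (f ⟨0, hn⟩) = f (idx hn j) := by
    intro j hj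
    rw [List.getD_eq_getElem _ _ (by simpa using hj), List.getElem_ofFn]
    congr 1
    exact (Fin.ext (idx_val hn hj)).symm
  simp only [g i (by omega), g (i+1) (by omega), g (i+2) (by omega)]

end AuxPeaks



def upc (n : ℕ) (S : Finset ℕ) : ℕ :=
  ((range n).filter fun v => 1 ≤ v ∧ v ∉ S ∧ v + 1 ∈ S).card

def chg (n : ℕ) (B : Finset ℕ) : Finset ℕ :=
  (range n).filter fun i => ¬((i ∈ B) ↔ (i + 1 ∈ B))

def bT (n : ℕ) (T : Finset ℕ) : Finset ℕ :=
  (range n).filter fun i => (T.filter fun j => i ≤ j).card % 2 = 1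

lemma filter_le_split (T : Finset ℕ) (i : ℕ) :
    (T.filter fun j => i ≤ j).card
      = (T.filter fun j => i + 1 ≤ j).card + (if i ∈ T then 1 else 0) := by
  have hsplit : (T.filter fun j => i ≤ j)
      = (T.filter fun j => i + 1 ≤ j) ∪ (T.filter fun j => j = i) := by
    ext x
    by_cases hx : x ∈ T <;> simp [hx, Finset.mem_union] <;> omega
  rw [hsplit, Finset.card_union_of_disjoint, Finset.filter_eq']
  · by_cases h : i ∈ T <;> simp [h]
  · rw [Finset.disjoint_left]
    intro a ha hb
    simp only [Finset.mem_filter] at ha hb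
    omega

lemma chg_card (n : ℕ) (B : Finset ℕ) (hB : B ⊆ range n) (h0 : 0 ∈ B) :
    (chg n B).card = 2 * (((range n).filter fun i => i ∉ B ∧ i + 1 ∈ B).card) + 1 := by
  classical
  set U := (range n).filter fun i => i ∉ B ∧ i + 1 ∈ B with hU
  set D := (range n).filter fun i => i ∈ B ∧ i + 1 ∉ B with hD
  have hchg : chg n B = D ∪ U := by
    rw [chg, hD, hU, ← Finset.filter_or]
    apply Finset.filter_congr
    intro x _
    tauto
  have hdisj : Disjoint D U := by
    rw [Finset.disjoint_left]
    intro a ha hb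
    simp only [hD, hU, Finset.mem_filter] at ha hb
    tauto
  have hcard : (D.card : ℤ) = (U.card : ℤ) + 1 := by
    have hsum : ∑ i ∈ range n,
        (((if i ∈ B then (1:ℤ) else 0)) - (if i + 1 ∈ B then (1:ℤ) else 0))
        = (if 0 ∈ B then (1:ℤ) else 0) - (if n ∈ B then (1:ℤ) else 0) := by
      calc ∑ i ∈ range n,
            (((if i ∈ B then (1:ℤ) else 0)) - (if i + 1 ∈ B then (1:ℤ) else 0))
          = ∑ i ∈ range n, ((-(if i + 1 ∈ B then (1:ℤ) else 0)) - (-(if i ∈ B then (1:ℤ) else 0))) := by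
            apply Finset.sum_congr rfl; intro i _; ring
        _ = (-(if n ∈ B then (1:ℤ) else 0)) - (-(if 0 ∈ B then (1:ℤ) else 0)) :=
            Finset.sum_range_sub (fun i => -(if i ∈ B then (1:ℤ) else 0)) n
        _ = (if 0 ∈ B then (1:ℤ) else 0) - (if n ∈ B then (1:ℤ) else 0) := by ring
    have hnB : n ∉ B := fun h => by simpa using hB h
    rw [if_pos h0, if_neg hnB, sub_zero] at hsum
    have hsum2 : ∑ i ∈ range n,
        (((if i ∈ B then (1:ℤ) else 0)) - (if i + 1 ∈ B then (1:ℤ) else 0))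
        = (D.card : ℤ) - (U.card : ℤ) := by
      have hDc : (D.card : ℤ) = ∑ i ∈ range n, (if i ∈ B ∧ i + 1 ∉ B then (1:ℤ) else 0) := by
        rw [hD, Finset.card_filter]
        push_cast
        rfl
      have hUc : (U.card : ℤ) = ∑ i ∈ range n, (if i ∉ B ∧ i + 1 ∈ B then (1:ℤ) else 0) := by
        rw [hU, Finset.card_filter]
        push_cast
        rfl
      rw [hDc, hUc, ← Finset.sum_sub_distrib]
      apply Finset.sum_congr rfl
      intro i _
      by_cases h1 : i ∈ B <;> by_cases h2 : i + 1 ∈ B <;> simp [h1, h2]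
    rw [hsum2] at hsum
    omega
  rw [hchg, Finset.card_union_of_disjoint hdisj]
  omega

lemma bT_filter_card (n : ℕ) (B : Finset ℕ) (hB : B ⊆ range n) :
    ∀ i, i ≤ n → (((chg n B).filter fun j => i ≤ j).card % 2 = 1 ↔ i ∈ B) := by
  suffices h : ∀ m i, i ≤ n → n - i = m → (((chg n B).filter fun j => i ≤ j).card % 2 = 1 ↔ i ∈ B) by
    intro i hi; exact h (n - i) i hi rfl
  intro m
  induction m with
  | zero =>
    intro i hi hn
    have hin : i = n := by omega
    have hempty : (chg n B).filter (fun j => i ≤ j) = ∅ := by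
      apply Finset.filter_false_of_mem
      intro x hx
      have : x ∈ range n := Finset.mem_of_mem_filter x hx
      rw [Finset.mem_range] at this
      omega
    rw [hempty]
    simp only [Finset.card_empty]
    constructor
    · omega
    · intro h
      have := Finset.mem_range.mp (hB h)
      omega
  | succ m ih =>
    intro i hi hn
    have hilt : i < n := by omega
    have hrec := ih (i + 1) (by omega) (by omega)
    rw [filter_le_split]
    have hmem : i ∈ chg n B ↔ ¬((i ∈ B) ↔ (i + 1 ∈ B)) := by
      rw [chg, Finset.mem_filter, Finset.mem_range]
      tauto
    by_cases h1 : i ∈ B <;> by_cases h2 : i + 1 ∈ B <;>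
      simp only [h1, h2, iff_true, iff_false, not_not, not_true, not_false_iff] at hmem hrec ⊢ <;>
      [skip; skip; skip; skip] <;>
      · by_cases hc : i ∈ chg n B <;> simp [hc] at hmem hrec ⊢ <;> omega

lemma bT_chg (n : ℕ) (B : Finset ℕ) (hB : B ⊆ range n) : bT n (chg n B) = B := by
  ext i
  rw [bT, Finset.mem_filter, Finset.mem_range]
  constructor
  · intro ⟨h1, h2⟩
    exact (bT_filter_card n B hB i (by omega)).mp h2
  · intro h
    have hin : i < n := Finset.mem_range.mp (hB h)
    exact ⟨hin, (bT_filter_card n B hB i (by omega)).mpr h⟩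

lemma chg_bT (n : ℕ) (T : Finset ℕ) (hT : T ⊆ range n) : chg n (bT n T) = T := by
  ext i
  rw [chg, Finset.mem_filter, Finset.mem_range]
  have hmem : ∀ j, j ∈ bT n T ↔ (j < n ∧ (T.filter fun x => j ≤ x).card % 2 = 1) := by
    intro j
    rw [bT, Finset.mem_filter, Finset.mem_range]
  have hsp := filter_le_split T i
  by_cases hin : i < n
  · simp only [hmem, hin, true_and]
    by_cases hi1 : i + 1 < n
    · simp only [hi1, true_and]
      by_cases hiT : i ∈ T <;> simp only [hiT, if_pos, if_neg, not_false_iff] at hsp <;>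
        constructor <;> intro h <;> first | omega | (simp [hiT]; omega) | tauto
    · have hi1n : i + 1 = n := by omega
      have hz : (T.filter fun x => i + 1 ≤ x).card = 0 := by
        rw [Finset.card_eq_zero]
        apply Finset.filter_false_of_mem
        intro x hx
        have := Finset.mem_range.mp (hT hx)
        omega
      rw [hz] at hsp
      simp only [hi1, false_and, iff_false]
      by_cases hiT : i ∈ T <;> simp only [hiT, ↓reduceIte, zero_add] at hsp <;> simp [hiT, hsp]
  · simp only [hin, false_and, false_iff]
    intro h
    exact hin (Finset.mem_range.mp (hT h))

lemma zero_mem_bT (n : ℕ) (hn : 0 < n) (T : Finset ℕ) (hodd : T.card % 2 = 1) :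
    0 ∈ bT n T := by
  rw [bT, Finset.mem_filter, Finset.mem_range]
  refine ⟨hn, ?_⟩
  have : T.filter (fun j => 0 ≤ j) = T := by
    apply Finset.filter_true_of_mem
    intro x _; omega
  rw [this]; exact hodd

lemma chg_subset (n : ℕ) (B : Finset ℕ) : chg n B ⊆ range n := Finset.filter_subset _ _

lemma upc_chg_card (n : ℕ) (S : Finset ℕ) (hS : S ⊆ range n) (h0 : 0 ∉ S) (hn : 0 < n) :
    (chg n (insert 0 S)).card = 2 * upc n S + 1 := by
  have hB : insert 0 S ⊆ range n := by
    intro x hx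
    rcases Finset.mem_insert.mp hx with h | h
    · subst h; exact Finset.mem_range.mpr hn
    · exact hS h
  rw [chg_card n (insert 0 S) hB (Finset.mem_insert_self 0 S), upc]
  have heq : (range n).filter (fun i => i ∉ insert 0 S ∧ i + 1 ∈ insert 0 S)
      = (range n).filter (fun v => 1 ≤ v ∧ v ∉ S ∧ v + 1 ∈ S) := by
    apply Finset.filter_congr
    intro x hx
    simp only [Finset.mem_insert]
    constructor
    · intro ⟨h1, h2⟩
      rcases h2 with h | h
      · omega
      · exact ⟨by omega, fun hxS => h1 (Or.inr hxS), h⟩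
    · intro ⟨h1, h2, h3⟩
      exact ⟨fun h => by rcases h with h | h; omega; exact h2 h, Or.inr h3⟩
  rw [heq]

lemma count_core (n k : ℕ) (hn : 0 < n) :
    ((range n).powerset.filter fun S => 0 ∉ S ∧ upc n S = k).card = n.choose (2 * k + 1) := by
  have main : ((range n).powerset.filter fun S => 0 ∉ S ∧ upc n S = k).card
      = (Finset.powersetCard (2 * k + 1) (range n)).card := by
    apply Finset.card_bij' (fun S _ => chg n (insert 0 S)) (fun T _ => (bT n T).erase 0)
    · intro S hS
      rw [Finset.mem_filter, Finset.mem_powerset] at hS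
      obtain ⟨hsub, h0, hupc⟩ := hS
      rw [Finset.mem_powersetCard]
      exact ⟨chg_subset n _, by rw [upc_chg_card n S hsub h0 hn, hupc]⟩
    · intro T hT
      rw [Finset.mem_powersetCard] at hT
      obtain ⟨hsub, hcard⟩ := hT
      have hodd : T.card % 2 = 1 := by omega
      have h0bT : 0 ∈ bT n T := zero_mem_bT n hn T hodd
      have hins : insert 0 ((bT n T).erase 0) = bT n T := Finset.insert_erase h0bT
      have hbTsub : (bT n T).erase 0 ⊆ range n := by
        intro x hx
        exact Finset.filter_subset _ _ (Finset.mem_of_mem_erase hx)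
      rw [Finset.mem_filter, Finset.mem_powerset]
      refine ⟨hbTsub, Finset.notMem_erase 0 _, ?_⟩
      have := upc_chg_card n ((bT n T).erase 0) hbTsub (Finset.notMem_erase 0 _) hn
      rw [hins, chg_bT n T hsub, hcard] at this
      omega
    · intro S hS
      rw [Finset.mem_filter, Finset.mem_powerset] at hS
      obtain ⟨hsub, h0, _⟩ := hS
      have hB : insert 0 S ⊆ range n := by
        intro x hx
        rcases Finset.mem_insert.mp hx with h | h
        · subst h; exact Finset.mem_range.mpr hn
        · exact hsub h
      rw [bT_chg n (insert 0 S) hB, Finset.erase_insert h0]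
    · intro T hT
      rw [Finset.mem_powersetCard] at hT
      obtain ⟨hsub, hcard⟩ := hT
      have hodd : T.card % 2 = 1 := by omega
      rw [Finset.insert_erase (zero_mem_bT n hn T hodd), chg_bT n T hsub]

  rw [main, Finset.card_powersetCard, Finset.card_range]



def fS (n : ℕ) (S : Finset ℕ) (v : Fin n) : ℕ :=
  if (v : ℕ) ∈ S then (S.filter fun w => (v : ℕ) < w).card
  else S.card + (((range n) \ S).filter fun w => w < (v : ℕ)).card

variable {n : ℕ} {S : Finset ℕ}

lemma fS_lt_card {v : Fin n} (hv : (v : ℕ) ∈ S) : fS n S v < S.card := by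
  rw [fS, if_pos hv]
  apply Finset.card_lt_card
  rw [Finset.ssubset_iff_of_subset (Finset.filter_subset _ _)]
  exact ⟨v, hv, by simp⟩

lemma fS_ge_card {v : Fin n} (hv : (v : ℕ) ∉ S) : S.card ≤ fS n S v := by
  rw [fS, if_neg hv]; exact Nat.le_add_right _ _

lemma fS_mem_iff {v : Fin n} : fS n S v < S.card ↔ (v : ℕ) ∈ S := by
  constructor
  · intro h
    by_contra hv
    exact absurd h (not_lt.mpr (fS_ge_card hv))
  · exact fS_lt_card

lemma fS_lt (hS : S ⊆ range n) (v : Fin n) : fS n S v < n := by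
  have hcard : S.card ≤ n := by
    calc S.card ≤ (range n).card := Finset.card_le_card hS
    _ = n := Finset.card_range n
  by_cases hv : (v : ℕ) ∈ S
  · exact lt_of_lt_of_le (fS_lt_card hv) hcard
  · rw [fS, if_neg hv]
    have hvC : (v : ℕ) ∈ (range n) \ S := by
      rw [Finset.mem_sdiff, Finset.mem_range]
      exact ⟨v.isLt, hv⟩
    have hsub : ((range n) \ S).filter (fun w => w < (v : ℕ)) ⊆ ((range n) \ S).erase (v : ℕ) := by
      intro x hx
      rw [Finset.mem_filter] at hx
      rw [Finset.mem_erase]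
      exact ⟨by omega, hx.1⟩
    have h1 : (((range n) \ S).filter (fun w => w < (v : ℕ))).card ≤ ((range n) \ S).card - 1 := by
      calc _ ≤ (((range n) \ S).erase (v : ℕ)).card := Finset.card_le_card hsub
      _ = ((range n) \ S).card - 1 := Finset.card_erase_of_mem hvC
    have h2 : ((range n) \ S).card = n - S.card := by
      rw [Finset.card_sdiff_of_subset hS, Finset.card_range]
    have h3 : 0 < ((range n) \ S).card := Finset.card_pos.mpr ⟨_, hvC⟩
    omega

lemma fS_M1 {v w : Fin n} (hv : (v : ℕ) ∈ S) (hw : (w : ℕ) ∈ S) (hvw : (v : ℕ) < (w : ℕ)) :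
    fS n S w < fS n S v := by
  rw [fS, if_pos hw, fS, if_pos hv]
  apply Finset.card_lt_card
  constructor
  · intro x hx
    rw [Finset.mem_filter] at hx ⊢
    exact ⟨hx.1, by omega⟩
  · intro hsub
    have : (w : ℕ) ∈ S.filter fun x => (w : ℕ) < x := hsub (by rw [Finset.mem_filter]; exact ⟨hw, hvw⟩)
    rw [Finset.mem_filter] at this
    omega

lemma fS_M2 {v w : Fin n} (hv : (v : ℕ) ∉ S) (hw : (w : ℕ) ∉ S) (hvw : (v : ℕ) < (w : ℕ)) :
    fS n S v < fS n S w := by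
  rw [fS, if_neg hv]
  rw [fS, if_neg hw]
  apply Nat.add_lt_add_left
  apply Finset.card_lt_card
  constructor
  · intro x hx
    rw [Finset.mem_filter] at hx ⊢
    exact ⟨hx.1, by omega⟩
  · intro hsub
    have hvmem : (v : ℕ) ∈ ((range n) \ S).filter fun x => x < (w : ℕ) := by
      rw [Finset.mem_filter, Finset.mem_sdiff, Finset.mem_range]
      exact ⟨⟨v.isLt, hv⟩, hvw⟩
    have := hsub hvmem
    rw [Finset.mem_filter] at this
    omega

lemma fS_ne {v w : Fin n} (hvw : (v : ℕ) < (w : ℕ)) : fS n S v ≠ fS n S w := by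
  by_cases hv : (v : ℕ) ∈ S <;> by_cases hw : (w : ℕ) ∈ S
  · exact (fS_M1 hv hw hvw).ne'
  · exact ne_of_lt (lt_of_lt_of_le (fS_lt_card hv) (fS_ge_card hw))
  · exact (lt_of_lt_of_le (fS_lt_card hw) (fS_ge_card hv)).ne'
  · exact ne_of_lt (fS_M2 hv hw hvw)

lemma fS_inj : Function.Injective (fS n S) := by
  intro v w h
  by_contra hne
  rcases lt_trichotomy (v : ℕ) (w : ℕ) with hlt | heq | hlt
  · exact fS_ne hlt h
  · exact hne (Fin.ext heq)
  · exact fS_ne hlt h.symm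

/-- The key recovery: fS v < fS (v-1) iff v ∈ S. -/
lemma fS_F1 {v u : Fin n} (huv : (u : ℕ) + 1 = (v : ℕ)) :
    (fS n S v < fS n S u ↔ (v : ℕ) ∈ S) := by
  by_cases hv : (v : ℕ) ∈ S <;> by_cases hu : (u : ℕ) ∈ S
  · simp only [hv, iff_true]
    rw [fS, if_pos hv]
    rw [fS, if_pos hu]
    have heq : S.filter (fun w => (u : ℕ) < w) = insert (v : ℕ) (S.filter fun w => (v : ℕ) < w) := by
      ext x
      rw [Finset.mem_insert, Finset.mem_filter, Finset.mem_filter]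
      constructor
      · intro ⟨h1, h2⟩
        by_cases hx : x = (v : ℕ)
        · exact Or.inl hx
        · exact Or.inr ⟨h1, by omega⟩
      · intro h
        rcases h with h | ⟨h1, h2⟩
        · subst h; exact ⟨hv, by omega⟩
        · exact ⟨h1, by omega⟩
    rw [heq, Finset.card_insert_of_notMem (by simp)]
    omega
  · simp only [hv, iff_true]
    exact lt_of_lt_of_le (fS_lt_card hv) (fS_ge_card hu)
  · simp only [hv, iff_false, not_lt]
    exact le_of_lt (lt_of_lt_of_le (fS_lt_card hu) (fS_ge_card hv))
  · simp only [hv, iff_false, not_lt]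
    apply le_of_lt
    have := fS_M2 hu hv (by omega)
    exact this

lemma filter_range_shift' (m : ℕ) (hm : 0 < m) (r : ℕ → Prop) [DecidablePred r] :
    ((Finset.range m).filter (fun v => 1 ≤ v ∧ r v)).card
      = ((Finset.range (m-1)).filter (fun i => r (i+1))).card := by
  obtain ⟨m', rfl⟩ : ∃ m', m = m' + 1 := ⟨m - 1, by omega⟩
  simpa using filter_range_shift m' r

noncomputable def permS (hn : 0 < n) (hS : S ⊆ range n) : Equiv.Perm (Fin n) :=
  Equiv.ofBijective (fun v => (⟨fS n S v, fS_lt hS v⟩ : Fin n))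
    ((Fintype.bijective_iff_injective_and_card _).mpr
      ⟨fun v w h => fS_inj (by simpa using congrArg Fin.val h), rfl⟩)

lemma permS_apply (hn : 0 < n) (hS : S ⊆ range n) (v : Fin n) :
    ((permS hn hS) v : ℕ) = fS n S v := rfl

def Sof (hn : 0 < n) (π : Equiv.Perm (Fin n)) : Finset ℕ :=
  (range n).filter fun i => 0 < i ∧ π (idx hn i) < π (idx hn (i-1))

lemma Sof_subset (hn : 0 < n) (π : Equiv.Perm (Fin n)) : Sof hn π ⊆ range n :=
  Finset.filter_subset _ _

lemma zero_not_mem_Sof (hn : 0 < n) (π : Equiv.Perm (Fin n)) : 0 ∉ Sof hn π := by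
  rw [Sof, Finset.mem_filter]
  rintro ⟨-, h, -⟩
  omega

lemma pkP_eq_card (hn : 0 < n) (π : Equiv.Perm (Fin n)) :
    pkP π = ((Finset.range (n-2)).filter
      (fun i => π (idx hn i) < π (idx hn (i+1)) ∧ π (idx hn (i+2)) < π (idx hn (i+1)))).card := by
  rw [pkP]
  exact peaksCount_ofFn hn ⇑π

lemma idx_ne (hn : 0 < n) {i j : ℕ} (hi : i < n) (hj : j < n) (hij : i ≠ j) :
    idx hn i ≠ idx hn j := by
  intro h
  rw [Fin.ext_iff, idx_val hn hi, idx_val hn hj] at h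
  exact hij h

lemma pk_eq_upc (hn : 0 < n) (π : Equiv.Perm (Fin n)) : pkP π = upc n (Sof hn π) := by
  rw [pkP_eq_card hn π, upc]
  have hcongr : ((range n).filter fun v => 1 ≤ v ∧ v ∉ Sof hn π ∧ v + 1 ∈ Sof hn π)
      = (range n).filter (fun v => 1 ≤ v ∧ (v + 1 < n ∧ π (idx hn (v-1)) < π (idx hn v)
          ∧ π (idx hn (v+1)) < π (idx hn v))) := by
    apply Finset.filter_congr
    intro v hv
    rw [Finset.mem_range] at hv
    have hSm : ∀ j, j ∈ Sof hn π ↔ (j < n ∧ 0 < j ∧ π (idx hn j) < π (idx hn (j-1))) := by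
      intro j
      rw [Sof, Finset.mem_filter, Finset.mem_range]
    constructor
    · rintro ⟨h1, h2, h3⟩
      rw [hSm] at h2 h3
      simp only [Nat.add_sub_cancel] at h3
      refine ⟨h1, h3.1, ?_, h3.2.2⟩
      have hne : π (idx hn (v-1)) ≠ π (idx hn v) :=
        fun h => idx_ne hn (by omega) hv (by omega) (π.injective h)
      rcases lt_or_gt_of_ne hne with h | h
      · exact h
      · exact absurd ⟨hv, by omega, h⟩ h2
    · rintro ⟨h1, h2, h3, h4⟩
      rw [hSm, hSm]
      simp only [Nat.add_sub_cancel]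
      refine ⟨h1, ?_, h2, by omega, h4⟩
      rintro ⟨-, -, h⟩
      exact absurd h3 (asymm h)
  rw [hcongr, filter_range_shift' n hn]
  have hset : (range (n-1)).filter (fun i => (i+1) + 1 < n ∧ π (idx hn ((i+1)-1)) < π (idx hn (i+1))
          ∧ π (idx hn ((i+1)+1)) < π (idx hn (i+1)))
      = (range (n-2)).filter (fun i => π (idx hn i) < π (idx hn (i+1))
          ∧ π (idx hn (i+2)) < π (idx hn (i+1))) := by
    ext j
    simp only [Finset.mem_filter, Finset.mem_range, Nat.add_sub_cancel]
    constructor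
    · rintro ⟨h1, h2, h3, h4⟩
      exact ⟨by omega, h3, h4⟩
    · rintro ⟨h1, h2, h3⟩
      exact ⟨by omega, by omega, h2, h3⟩
  rw [hset]

lemma Sof_permS (hn : 0 < n) (hS : S ⊆ range n) (h0 : 0 ∉ S) :
    Sof hn (permS hn hS) = S := by
  ext i
  rw [Sof, Finset.mem_filter, Finset.mem_range]
  constructor
  · rintro ⟨hin, hpos, hlt⟩
    rw [Fin.lt_def, permS_apply, permS_apply] at hlt
    have := (fS_F1 (v := idx hn i) (u := idx hn (i-1))
      (by rw [idx_val hn (by omega), idx_val hn hin]; omega)).mp hlt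
    rwa [idx_val hn hin] at this
  · intro hiS
    have hin : i < n := Finset.mem_range.mp (hS hiS)
    have hpos : 0 < i := Nat.pos_of_ne_zero (fun h => h0 (h ▸ hiS))
    refine ⟨hin, hpos, ?_⟩
    rw [Fin.lt_def, permS_apply, permS_apply]
    exact (fS_F1 (v := idx hn i) (u := idx hn (i-1))
      (by rw [idx_val hn (by omega), idx_val hn hin]; omega)).mpr
      (by rwa [idx_val hn hin])

lemma fS_permS_inv (hn : 0 < n) (hS : S ⊆ range n) {j : ℕ} (hj : j < n) :
    fS n S ((permS hn hS)⁻¹ (idx hn j)) = j := by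
  have h : (permS hn hS) ((permS hn hS)⁻¹ (idx hn j)) = idx hn j := Equiv.apply_symm_apply (permS hn hS) (idx hn j)
  have := congrArg Fin.val h
  rw [permS_apply] at this
  rw [this, idx_val hn hj]

lemma pkP_inv_permS (hn : 0 < n) (hS : S ⊆ range n) :
    pkP (permS hn hS)⁻¹ = 0 := by
  rw [pkP_eq_card hn, Finset.card_eq_zero]
  apply Finset.filter_false_of_mem
  intro i hi
  rw [Finset.mem_range] at hi
  rintro ⟨h1, h2⟩
  set σ := (permS hn hS)⁻¹ with hσ
  set x := σ (idx hn i) with hx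
  set y := σ (idx hn (i+1)) with hy
  set z := σ (idx hn (i+2)) with hz
  have hfx : fS n S x = i := fS_permS_inv hn hS (by omega)
  have hfy : fS n S y = i + 1 := fS_permS_inv hn hS (by omega)
  have hfz : fS n S z = i + 2 := fS_permS_inv hn hS (by omega)
  by_cases hc : i + 1 < S.card
  · have hyS : (y : ℕ) ∈ S := fS_mem_iff.mp (by omega)
    have hxS : (x : ℕ) ∈ S := fS_mem_iff.mp (by omega)
    have := fS_M1 hxS hyS (Fin.lt_def.mp h1)
    omega
  · have hyS : (y : ℕ) ∉ S := fun h => hc (hfy ▸ fS_lt_card h)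
    have hzS : (z : ℕ) ∉ S := fun h => by have := fS_lt_card h; omega
    have := fS_M2 hzS hyS (Fin.lt_def.mp h2)
    omega

lemma idx_val_eq (hn : 0 < n) (x : Fin n) : idx hn (x : ℕ) = x := Fin.ext (idx_val hn x.isLt)

lemma round1 (hn : 0 < n) (π : Equiv.Perm (Fin n)) {j : ℕ} (hj : j < n) :
    ((π⁻¹ (idx hn ((π (idx hn j) : ℕ)))) : ℕ) = j := by
  rw [idx_val_eq hn (π (idx hn j)), Equiv.Perm.coe_inv, Equiv.symm_apply_apply, idx_val hn hj]

lemma round2 (hn : 0 < n) (π : Equiv.Perm (Fin n)) {p : ℕ} (hp : p < n) :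
    ((π (idx hn ((π⁻¹ (idx hn p) : ℕ)))) : ℕ) = p := by
  rw [idx_val_eq hn (π⁻¹ (idx hn p)), Equiv.Perm.coe_inv, Equiv.apply_symm_apply, idx_val hn hp]

section Valley
variable (hn : 0 < n) (π : Equiv.Perm (Fin n))

lemma valley_np (hval : pkP π⁻¹ = 0) : ∀ i, i + 2 < n →
    ¬(π⁻¹ (idx hn i) < π⁻¹ (idx hn (i+1)) ∧ π⁻¹ (idx hn (i+2)) < π⁻¹ (idx hn (i+1))) := by
  intro i hi
  rw [pkP_eq_card hn, Finset.card_eq_zero] at hval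
  have := Finset.eq_empty_iff_forall_notMem.mp hval i
  rw [Finset.mem_filter, Finset.mem_range] at this
  intro h
  exact this ⟨by omega, h⟩

lemma valley_s1 (hval : pkP π⁻¹ = 0) :
    ∀ p, p + 1 < n → π⁻¹ (idx hn p) < π⁻¹ (idx hn (p+1)) →
    ∀ q, p ≤ q → q + 1 < n → π⁻¹ (idx hn q) < π⁻¹ (idx hn (q+1)) := by
  intro p hp hbase q hq
  induction q, hq using Nat.le_induction with
  | base => intro _; exact hbase
  | succ q hpq ih =>
    intro hq1
    have hprev : π⁻¹ (idx hn q) < π⁻¹ (idx hn (q+1)) := ih (by omega)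
    have hnp := valley_np hn π hval q (by omega)
    have h2 : ¬(π⁻¹ (idx hn (q+2)) < π⁻¹ (idx hn (q+1))) := fun h => hnp ⟨hprev, h⟩
    have hne : π⁻¹ (idx hn (q+1)) ≠ π⁻¹ (idx hn (q+2)) :=
      fun h => idx_ne hn (by omega) (by omega) (by omega) (π⁻¹.injective h)
    have heq : q + 1 + 1 = q + 2 := by omega
    rw [heq]
    rcases lt_or_gt_of_ne hne with h | h
    · exact h
    · exact absurd h h2

lemma valley_dec (hval : pkP π⁻¹ = 0) :
    ∀ p q, p < q → q ≤ ((π ⟨0, hn⟩ : Fin n) : ℕ) → π⁻¹ (idx hn q) < π⁻¹ (idx hn p) := by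
  set m := ((π ⟨0, hn⟩ : Fin n) : ℕ) with hm
  have hmn : m < n := (π ⟨0, hn⟩).isLt
  have hidxm : π⁻¹ (idx hn m) = ⟨0, hn⟩ := by
    rw [hm, idx_val_eq hn (π ⟨0, hn⟩), Equiv.Perm.coe_inv, Equiv.symm_apply_apply]
  have dec_consec : ∀ p, p + 1 ≤ m → π⁻¹ (idx hn (p+1)) < π⁻¹ (idx hn p) := by
    intro p hpm
    have hne : π⁻¹ (idx hn p) ≠ π⁻¹ (idx hn (p+1)) :=
      fun h => idx_ne hn (by omega) (by omega) (by omega) (π⁻¹.injective h)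
    rcases lt_or_gt_of_ne hne with h | h
    · exfalso
      have := valley_s1 hn π hval p (by omega) h (m-1) (by omega) (by omega)
      have hm1 : m - 1 + 1 = m := by omega
      rw [hm1, hidxm] at this
      simpa [Fin.lt_def] using this
    · exact h
  intro p q hpq hqm
  induction q, hpq using Nat.le_induction with
  | base => exact dec_consec p hqm
  | succ q hpq ih =>
    calc π⁻¹ (idx hn (q+1)) < π⁻¹ (idx hn q) := dec_consec q hqm
    _ < π⁻¹ (idx hn p) := ih (by omega)

lemma valley_inc (hval : pkP π⁻¹ = 0) :
    ∀ p q, ((π ⟨0, hn⟩ : Fin n) : ℕ) ≤ p → p < q → q < n → π⁻¹ (idx hn p) < π⁻¹ (idx hn q) := by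
  set m := ((π ⟨0, hn⟩ : Fin n) : ℕ) with hm
  have hmn : m < n := (π ⟨0, hn⟩).isLt
  have hidxm : π⁻¹ (idx hn m) = ⟨0, hn⟩ := by
    rw [hm, idx_val_eq hn (π ⟨0, hn⟩), Equiv.Perm.coe_inv, Equiv.symm_apply_apply]
  have inc_consec : ∀ p, m ≤ p → p + 1 < n → π⁻¹ (idx hn p) < π⁻¹ (idx hn (p+1)) := by
    intro p hmp hp1
    have hbase : π⁻¹ (idx hn m) < π⁻¹ (idx hn (m+1)) := by
      rw [hidxm]
      have hne : π⁻¹ (idx hn (m+1)) ≠ ⟨0, hn⟩ := by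
        rw [← hidxm]
        exact fun h => idx_ne hn (by omega) (by omega) (by omega) (π⁻¹.injective h)
      rw [Fin.lt_def]
      exact Nat.pos_of_ne_zero (fun h => hne (Fin.ext h))
    exact valley_s1 hn π hval m (by omega) hbase p hmp hp1
  intro p q hmp hpq hq
  induction q, hpq using Nat.le_induction with
  | base => exact inc_consec p hmp (by omega)
  | succ q hpq ih =>
    calc π⁻¹ (idx hn p) < π⁻¹ (idx hn q) := ih (by omega)
    _ < π⁻¹ (idx hn (q+1)) := inc_consec q (by omega) (by omega)

lemma Sof_iff_pos (hval : pkP π⁻¹ = 0) :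
    ∀ i, i < n → (i ∈ Sof hn π ↔ ((π (idx hn i) : Fin n) : ℕ) < ((π ⟨0, hn⟩ : Fin n) : ℕ)) := by
  set m := ((π ⟨0, hn⟩ : Fin n) : ℕ) with hm
  have hmn : m < n := (π ⟨0, hn⟩).isLt
  have hidx0 : idx hn 0 = (⟨0, hn⟩ : Fin n) := Fin.ext (idx_val hn hn)
  intro i hi
  have hSm : i ∈ Sof hn π ↔ (0 < i ∧ π (idx hn i) < π (idx hn (i-1))) := by
    rw [Sof, Finset.mem_filter, Finset.mem_range]
    tauto
  set q := ((π (idx hn i) : Fin n) : ℕ) with hq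
  have hqn : q < n := (π (idx hn i)).isLt
  have hinvq : π⁻¹ (idx hn q) = idx hn i := by
    rw [hq, idx_val_eq hn (π (idx hn i)), Equiv.Perm.coe_inv, Equiv.symm_apply_apply]
  constructor
  · intro hiS
    obtain ⟨hipos, hlt⟩ := hSm.mp hiS
    set p := ((π (idx hn (i-1)) : Fin n) : ℕ) with hp
    have hpn : p < n := (π (idx hn (i-1))).isLt
    have hinvp : π⁻¹ (idx hn p) = idx hn (i-1) := by
      rw [hp, idx_val_eq hn (π (idx hn (i-1))), Equiv.Perm.coe_inv, Equiv.symm_apply_apply]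
    have hqp : q < p := Fin.lt_def.mp hlt
    have hqm : q ≠ m := by
      intro h
      have hee : π (idx hn i) = π ⟨0, hn⟩ := Fin.ext (by rw [← hq, ← hm]; exact h)
      have h2 := π.injective hee
      rw [← hidx0] at h2
      have h3 := congrArg Fin.val h2
      rw [idx_val hn hi, idx_val hn hn] at h3
      omega
    by_contra hqge
    push_neg at hqge   -- m ≤ q
    have : m ≤ q := by omega
    have hlt2 := valley_inc hn π hval q p (by omega) hqp hpn
    rw [hinvq, hinvp] at hlt2
    have := Fin.lt_def.mp hlt2
    rw [idx_val hn hi, idx_val hn (by omega)] at this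
    omega
  · intro hqm
    have hipos : 0 < i := by
      by_contra h
      push_neg at h
      interval_cases i
      rw [hq, hidx0] at hqm
      omega
    rw [hSm]
    refine ⟨hipos, ?_⟩
    set p := ((π (idx hn (i-1)) : Fin n) : ℕ) with hp
    have hpn : p < n := (π (idx hn (i-1))).isLt
    have hinvp : π⁻¹ (idx hn p) = idx hn (i-1) := by
      rw [hp, idx_val_eq hn (π (idx hn (i-1))), Equiv.Perm.coe_inv, Equiv.symm_apply_apply]
    have hne : q ≠ p := by
      intro h
      have hee : π (idx hn i) = π (idx hn (i-1)) := by
        apply Fin.ext; rw [← hq, ← hp]; exact h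
      exact idx_ne hn hi (by omega) (by omega) (π.injective hee)
    rw [Fin.lt_def, ← hq, ← hp]
    by_contra hge
    push_neg at hge  -- p ≤ q so p < q
    have hpq : p < q := by omega
    have hlt2 := valley_dec hn π hval p q hpq (by omega)
    rw [hinvq, hinvp] at hlt2
    have := Fin.lt_def.mp hlt2
    rw [idx_val hn hi, idx_val hn (by omega)] at this
    omega

end Valley

lemma Sof_card (hn : 0 < n) (π : Equiv.Perm (Fin n)) (hval : pkP π⁻¹ = 0) :
    (Sof hn π).card = ((π ⟨0, hn⟩ : Fin n) : ℕ) := by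
  rw [← Finset.card_range ((π ⟨0, hn⟩ : Fin n) : ℕ)]
  apply Finset.card_bij' (fun i _ => ((π (idx hn i) : Fin n) : ℕ))
    (fun p _ => ((π⁻¹ (idx hn p) : Fin n) : ℕ))
  · intro i hi
    have hin : i < n := Finset.mem_range.mp (Sof_subset hn π hi)
    rw [Finset.mem_range]
    exact (Sof_iff_pos hn π hval i hin).mp hi
  · intro p hp
    rw [Finset.mem_range] at hp
    have hpn : p < n := lt_trans hp (π ⟨0, hn⟩).isLt
    have hwn : ((π⁻¹ (idx hn p) : Fin n) : ℕ) < n := (π⁻¹ (idx hn p)).isLt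
    exact (Sof_iff_pos hn π hval _ hwn).mpr (by rw [round2 hn π hpn]; exact hp)
  · intro i hi
    exact round1 hn π (Finset.mem_range.mp (Sof_subset hn π hi))
  · intro p hp
    rw [Finset.mem_range] at hp
    exact round2 hn π (lt_trans hp (π ⟨0, hn⟩).isLt)

lemma permS_Sof (hn : 0 < n) (π : Equiv.Perm (Fin n)) (hval : pkP π⁻¹ = 0) :
    permS hn (Sof_subset hn π) = π := by
  apply Equiv.ext
  intro v
  apply Fin.ext
  rw [permS_apply]
  have hcard : (Sof hn π).card = ((π ⟨0, hn⟩ : Fin n) : ℕ) := Sof_card hn π hval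
  have hiff := Sof_iff_pos hn π hval
  have hvn : (v : ℕ) < n := v.isLt
  have hidxv : idx hn (v : ℕ) = v := idx_val_eq hn v
  have hpvn : ((π v : Fin n) : ℕ) < n := (π v).isLt
  have e2 : π⁻¹ (idx hn ((π v : Fin n) : ℕ)) = v := by
    rw [idx_val_eq hn (π v), Equiv.Perm.coe_inv, Equiv.symm_apply_apply]
  by_cases hv : (v : ℕ) ∈ Sof hn π
  · have hposv : ((π v : Fin n) : ℕ) < ((π ⟨0, hn⟩ : Fin n) : ℕ) := by
      have := (hiff _ hvn).mp hv
      rwa [hidxv] at this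
    rw [fS, if_pos hv]
    have hbij : ((Sof hn π).filter fun w => (v : ℕ) < w).card
        = (range ((π v : Fin n) : ℕ)).card := by
      apply Finset.card_bij' (fun w _ => ((π (idx hn w) : Fin n) : ℕ))
        (fun p _ => ((π⁻¹ (idx hn p) : Fin n) : ℕ))
      · intro w hw
        rw [Finset.mem_filter] at hw
        obtain ⟨hwS, hvw⟩ := hw
        have hwn : w < n := Finset.mem_range.mp (Sof_subset hn π hwS)
        have hposw : ((π (idx hn w) : Fin n) : ℕ) < ((π ⟨0, hn⟩ : Fin n) : ℕ) :=
          (hiff w hwn).mp hwS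
        rw [Finset.mem_range]
        have hne : ((π (idx hn w) : Fin n) : ℕ) ≠ ((π v : Fin n) : ℕ) := by
          intro h
          have h2 : idx hn w = v := π.injective (Fin.ext h)
          have h3 := congrArg Fin.val h2
          rw [idx_val hn hwn] at h3
          omega
        by_contra hge
        push_neg at hge
        have hlt := valley_dec hn π hval ((π v : Fin n) : ℕ) ((π (idx hn w) : Fin n) : ℕ)
          (by omega) (by omega)
        have e1 : π⁻¹ (idx hn ((π (idx hn w) : Fin n) : ℕ)) = idx hn w := by
          rw [idx_val_eq hn (π (idx hn w)), Equiv.Perm.coe_inv, Equiv.symm_apply_apply]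
        rw [e1, e2] at hlt
        have h4 := Fin.lt_def.mp hlt
        rw [idx_val hn hwn] at h4
        omega
      · intro p hp
        rw [Finset.mem_range] at hp
        have hpn : p < n := by omega
        have hwn : ((π⁻¹ (idx hn p) : Fin n) : ℕ) < n := (π⁻¹ (idx hn p)).isLt
        have hposw : ((π (idx hn ((π⁻¹ (idx hn p) : Fin n) : ℕ)) : Fin n) : ℕ) = p :=
          round2 hn π hpn
        rw [Finset.mem_filter]
        refine ⟨(hiff _ hwn).mpr (by rw [hposw]; omega), ?_⟩
        have hlt := valley_dec hn π hval p ((π v : Fin n) : ℕ) hp (by omega)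
        rw [e2] at hlt
        exact Fin.lt_def.mp hlt
      · intro w hw
        rw [Finset.mem_filter] at hw
        exact round1 hn π (Finset.mem_range.mp (Sof_subset hn π hw.1))
      · intro p hp
        rw [Finset.mem_range] at hp
        exact round2 hn π (by omega)
    rw [hbij, Finset.card_range]
  · have hposv : ((π ⟨0, hn⟩ : Fin n) : ℕ) ≤ ((π v : Fin n) : ℕ) := by
      by_contra h
      push_neg at h
      exact hv ((hiff _ hvn).mpr (by rwa [hidxv]))
    rw [fS, if_neg hv, hcard]
    have hbij : (((range n) \ Sof hn π).filter fun w => w < (v : ℕ)).card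
        = (Finset.Ico ((π ⟨0, hn⟩ : Fin n) : ℕ) ((π v : Fin n) : ℕ)).card := by
      apply Finset.card_bij' (fun w _ => ((π (idx hn w) : Fin n) : ℕ))
        (fun p _ => ((π⁻¹ (idx hn p) : Fin n) : ℕ))
      · intro w hw
        rw [Finset.mem_filter, Finset.mem_sdiff, Finset.mem_range] at hw
        obtain ⟨⟨hwn, hwS⟩, hwv⟩ := hw
        have hposw : ((π ⟨0, hn⟩ : Fin n) : ℕ) ≤ ((π (idx hn w) : Fin n) : ℕ) := by
          by_contra h
          push_neg at h
          exact hwS ((hiff w hwn).mpr h)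
        rw [Finset.mem_Ico]
        refine ⟨hposw, ?_⟩
        have hne : ((π (idx hn w) : Fin n) : ℕ) ≠ ((π v : Fin n) : ℕ) := by
          intro h
          have h2 : idx hn w = v := π.injective (Fin.ext h)
          have h3 := congrArg Fin.val h2
          rw [idx_val hn hwn] at h3
          omega
        by_contra hge
        push_neg at hge
        have hlt := valley_inc hn π hval ((π v : Fin n) : ℕ) ((π (idx hn w) : Fin n) : ℕ)
          hposv (by omega) (π (idx hn w)).isLt
        have e1 : π⁻¹ (idx hn ((π (idx hn w) : Fin n) : ℕ)) = idx hn w := by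
          rw [idx_val_eq hn (π (idx hn w)), Equiv.Perm.coe_inv, Equiv.symm_apply_apply]
        rw [e1, e2] at hlt
        have h4 := Fin.lt_def.mp hlt
        rw [idx_val hn hwn] at h4
        omega
      · intro p hp
        rw [Finset.mem_Ico] at hp
        have hpn : p < n := by omega
        have hwn : ((π⁻¹ (idx hn p) : Fin n) : ℕ) < n := (π⁻¹ (idx hn p)).isLt
        have hposw : ((π (idx hn ((π⁻¹ (idx hn p) : Fin n) : ℕ)) : Fin n) : ℕ) = p :=
          round2 hn π hpn
        rw [Finset.mem_filter, Finset.mem_sdiff, Finset.mem_range]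
        refine ⟨⟨hwn, fun hmem => ?_⟩, ?_⟩
        · have := (hiff _ hwn).mp hmem
          rw [hposw] at this
          omega
        · have hlt := valley_inc hn π hval p ((π v : Fin n) : ℕ) hp.1 hp.2 hpvn
          rw [e2] at hlt
          exact Fin.lt_def.mp hlt
      · intro w hw
        rw [Finset.mem_filter, Finset.mem_sdiff, Finset.mem_range] at hw
        exact round1 hn π hw.1.1
      · intro p hp
        rw [Finset.mem_Ico] at hp
        exact round2 hn π (by omega)
    rw [hbij, Nat.card_Ico]
    omega

end Proof1Aux

theorem card_pk_k_ipk_zero (n k : ℕ) (hn : 1 ≤ n) :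
    Nat.card {π : Equiv.Perm (Fin n) // pkP π = k ∧ pkP π⁻¹ = 0}
      = Nat.choose n (2 * k + 1) := by
  classical
  have hn' : 0 < n := hn
  rw [Nat.card_eq_fintype_card, Fintype.card_subtype, ← count_core n k hn']
  apply Finset.card_bij' (fun π _ => Sof hn' π)
    (fun S hS => permS hn'
      (Finset.mem_powerset.mp (Finset.mem_filter.mp hS).1))
  case hi =>
    intro π hπ
    rw [Finset.mem_filter] at hπ
    obtain ⟨-, hpk, hval⟩ := hπ
    rw [Finset.mem_filter, Finset.mem_powerset]
    refine ⟨Sof_subset hn' π, zero_not_mem_Sof hn' π, ?_⟩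
    rw [← pk_eq_upc hn' π, hpk]
  case hj =>
    intro S hS
    have h0 : 0 ∉ S := ((Finset.mem_filter.mp hS).2).1
    have hupc : upc n S = k := ((Finset.mem_filter.mp hS).2).2
    rw [Finset.mem_filter]
    refine ⟨Finset.mem_univ _, ?_, pkP_inv_permS hn' _⟩
    rw [pk_eq_upc hn' _, Sof_permS hn' _ h0, hupc]
  case left_inv =>
    intro π hπ
    rw [Finset.mem_filter] at hπ
    exact permS_Sof hn' π hπ.2.2
  case right_inv =>
    intro S hS
    have h0 : 0 ∉ S := ((Finset.mem_filter.mp hS).2).1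
    exact Sof_permS hn' _ h0
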